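/- Let L/K be a Galois extension, d > 1 minimal such that there are infinitely many Galois subextensions of L/K of degree d over K, and suppose there are only finitely many Galois subextensions of L/K of degree less than d. Then there exist a finite Galois subextension K₁ of L/K and an infinite family (Mᵢ) of Galois subextensions of L/K of degree d over K such that Mᵢ ∩ Mⱼ = K₁ for all i ≠ j; consequently the Mᵢ are pairwise linearly disjoint over K₁. -/

import Mathlib

open Module IntermediateField

set_option maxHeartbeats 1000000
set_option synthInstance.maxHeartbeats 400000

lemma aux_top_finrank {F N : Type*} [Field F] [Field N] [Algebra F N]
    [FiniteDimensional F N] [IsGalois F N] (A B : IntermediateField F N)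
    [IsGalois F A] [IsGalois F B] (hinf : A ⊓ B = ⊥) (hsup : A ⊔ B = ⊤) :
    finrank F N = finrank F A * finrank F B := by
  classical
  set G := N ≃ₐ[F] N with hG
  let e := IsGalois.intermediateFieldEquivSubgroup (F := F) (E := N)
  have hesup : A.fixingSubgroup ⊔ B.fixingSubgroup = ⊤ := by
    have h1 : e (A ⊓ B) = e A ⊓ e B := e.map_inf A B
    rw [hinf, OrderIso.map_bot] at h1
    exact h1.symm
  have heinf : A.fixingSubgroup ⊓ B.fixingSubgroup = ⊥ := by
    have h1 : e (A ⊔ B) = e A ⊔ e B := e.map_sup A B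
    rw [hsup, OrderIso.map_top] at h1
    exact h1.symm
  have h1 : A.fixingSubgroup.relIndex B.fixingSubgroup = A.fixingSubgroup.index := by
    have h2 : B.fixingSubgroup ⊔ A.fixingSubgroup = ⊤ := by rwa [sup_comm]
    rw [← Subgroup.relIndex_sup_right, h2, Subgroup.relIndex_top_right]
  have h2 : (⊥ : Subgroup G).index = A.fixingSubgroup.index * B.fixingSubgroup.index := by
    rw [← heinf, ← Subgroup.relIndex_mul_index
      (inf_le_right : A.fixingSubgroup ⊓ B.fixingSubgroup ≤ B.fixingSubgroup),
      Subgroup.inf_relIndex_right, h1]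
  have hGcard : Nat.card G = finrank F N := by
    exact IsGalois.card_aut_eq_finrank F N
  have key : ∀ C : IntermediateField F N, C.fixingSubgroup.index = finrank F C := by
    intro C
    have hcard : Nat.card C.fixingSubgroup * C.fixingSubgroup.index = Nat.card G :=
      Subgroup.card_mul_index _
    have hfr : finrank C N = Nat.card C.fixingSubgroup := by
      conv_lhs => rw [← IsGalois.fixedField_fixingSubgroup C]
      rw [IntermediateField.finrank_fixedField_eq_card]
    have htower : finrank F C * finrank C N = finrank F N := finrank_mul_finrank F C N
    have hpos : 0 < Nat.card C.fixingSubgroup := Nat.card_pos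
    have : Nat.card C.fixingSubgroup * C.fixingSubgroup.index
        = Nat.card C.fixingSubgroup * finrank F C := by
      rw [hcard, hGcard, ← htower, hfr]; ring
    exact Nat.eq_of_mul_eq_mul_left hpos this
  rw [← hGcard, ← Subgroup.index_bot, h2, key A, key B]

lemma aux_linearDisjoint {F E : Type*} [Field F] [Field E] [Algebra F E]
    [Algebra.IsSeparable F E]
    (A B : IntermediateField F E) [FiniteDimensional F A] [FiniteDimensional F B]
    [Normal F A] [Normal F B] (hinf : A ⊓ B = ⊥) : A.LinearDisjoint B := by
  haveI : Algebra.IsSeparable F A := Algebra.isSeparable_tower_bot_of_isSeparable F A E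
  haveI : Algebra.IsSeparable F B := Algebra.isSeparable_tower_bot_of_isSeparable F B E
  haveI : IsGalois F A := ⟨⟩
  haveI : IsGalois F B := ⟨⟩
  haveI : Algebra.IsSeparable F ↥(A ⊔ B) :=
    Algebra.isSeparable_tower_bot_of_isSeparable F ↥(A ⊔ B) E
  haveI : IsGalois F ↥(A ⊔ B) := ⟨⟩
  apply IntermediateField.LinearDisjoint.of_finrank_sup
  set C := A ⊔ B with hC
  let ι := C.val
  set A₂ := A.comap ι with hA₂def
  set B₂ := B.comap ι with hB₂def
  have hA2 : A₂.map ι = A := map_comap_eq_self (by rw [fieldRange_val]; exact le_sup_left)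
  have hB2 : B₂.map ι = B := map_comap_eq_self (by rw [fieldRange_val]; exact le_sup_right)
  have hsup2 : A₂ ⊔ B₂ = ⊤ := by
    apply map_injective ι
    rw [IntermediateField.map_sup, hA2, hB2, ← AlgHom.fieldRange_eq_map, fieldRange_val]
  have hinf2 : A₂ ⊓ B₂ = ⊥ := by
    apply map_injective ι
    rw [IntermediateField.map_inf, hA2, hB2, hinf, IntermediateField.map_bot]
  have eA : ↥A ≃ₐ[F] ↥A₂ := ((equivMap A₂ ι).trans (equivOfEq hA2)).symm
  have eB : ↥B ≃ₐ[F] ↥B₂ := ((equivMap B₂ ι).trans (equivOfEq hB2)).symm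
  haveI : IsGalois F ↥A₂ := IsGalois.of_algEquiv eA
  haveI : IsGalois F ↥B₂ := IsGalois.of_algEquiv eB
  have := aux_top_finrank A₂ B₂ hinf2 hsup2
  rw [this, eA.toLinearEquiv.finrank_eq, eB.toLinearEquiv.finrank_eq]

theorem exists_common_intersection_family
    (K L : Type*) [Field K] [Field L] [Algebra K L] [IsGalois K L] (d : ℕ) (hd : 1 < d)
    (hinf : {M : IntermediateField K L | FiniteDimensional K M ∧ Module.finrank K M = d ∧
      IsGalois K M}.Infinite)
    (hmin : ∀ d' : ℕ, 1 < d' → d' < d →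
      {M : IntermediateField K L | FiniteDimensional K M ∧ Module.finrank K M = d' ∧
        IsGalois K M}.Finite)
    (hlt : {M : IntermediateField K L | FiniteDimensional K M ∧ Module.finrank K M < d ∧
      IsGalois K M}.Finite) :
    ∃ K₁ : IntermediateField K L, FiniteDimensional K K₁ ∧ IsGalois K K₁ ∧
      ∃ M : ℕ → IntermediateField K L, Function.Injective M ∧
        (∀ i, FiniteDimensional K (M i) ∧ Module.finrank K (M i) = d ∧ IsGalois K (M i)) ∧
        (∀ i j, i ≠ j → M i ⊓ M j = K₁) ∧
        ∃ hle : ∀ i, K₁ ≤ M i, ∀ i j, i ≠ j →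
          IntermediateField.LinearDisjoint
            (IntermediateField.extendScalars (hle i)) (IntermediateField.extendScalars (hle j)) := by
  classical
  set Fam := {M : IntermediateField K L | FiniteDimensional K M ∧ Module.finrank K M = d ∧
      IsGalois K M} with hFamdef
  set Slt := {M : IntermediateField K L | FiniteDimensional K M ∧ Module.finrank K M < d ∧
      IsGalois K M} with hSltdef
  -- Step A: intersections of distinct members of `Fam` lie in `Slt`
  have stepA : ∀ M₁ ∈ Fam, ∀ M₂ ∈ Fam, M₁ ≠ M₂ → M₁ ⊓ M₂ ∈ Slt := by
    rintro M₁ ⟨h1f, h1r, h1g⟩ M₂ ⟨h2f, h2r, h2g⟩ hne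
    haveI := h1f; haveI := h2f; haveI := h1g; haveI := h2g
    have hincl0 : Function.Injective
        (IntermediateField.inclusion (inf_le_left : M₁ ⊓ M₂ ≤ M₁)) :=
      IntermediateField.inclusion_injective _
    have hincl : Function.Injective
        ((IntermediateField.inclusion (inf_le_left : M₁ ⊓ M₂ ≤ M₁)).toLinearMap) :=
      fun x y h => hincl0 h
    haveI hFD : FiniteDimensional K ↥(M₁ ⊓ M₂) :=
      FiniteDimensional.of_injective _ hincl
    refine ⟨hFD, ?_, ?_⟩
    · have hle : finrank K ↥(M₁ ⊓ M₂) ≤ finrank K ↥M₁ :=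
        LinearMap.finrank_le_finrank_of_injective hincl
      rcases lt_or_eq_of_le hle with h | h
      · rwa [h1r] at h
      · exfalso
        have h12 : M₁ ⊓ M₂ = M₁ := eq_of_le_of_finrank_eq inf_le_left h
        have hle2 : M₁ ≤ M₂ := by rw [← h12]; exact inf_le_right
        exact hne (eq_of_le_of_finrank_eq hle2 (h1r.trans h2r.symm))
    · haveI : Normal K ↥(M₁ ⊓ M₂) := inferInstance
      haveI : Algebra.IsSeparable K ↥(M₁ ⊓ M₂) :=
        Algebra.isSeparable_tower_bot_of_isSeparable K ↥(M₁ ⊓ M₂) L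
      exact ⟨⟩
  -- Step B: maximal `K₁`
  have hbotmem : (⊥ : IntermediateField K L) ∈ Slt :=
    ⟨inferInstance, by rw [IntermediateField.finrank_bot]; exact hd, inferInstance⟩
  set Sg := {K' ∈ Slt | {M | M ∈ Fam ∧ K' ≤ M}.Infinite} with hSgdef
  have hSgfin : Sg.Finite := hlt.subset (fun x hx => hx.1)
  have hSgne : Sg.Nonempty := ⟨⊥, hbotmem, hinf.mono (fun M hM => ⟨hM, bot_le⟩)⟩
  obtain ⟨K₁, hK₁Sg, hK₁max⟩ := Set.Finite.exists_maximalFor id Sg hSgfin hSgne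
  have hK₁Slt : K₁ ∈ Slt := hK₁Sg.1
  set T := {M | M ∈ Fam ∧ K₁ ≤ M} with hTdef
  have hT : T.Infinite := hK₁Sg.2
  -- Step C: key extension lemma
  have key : ∀ Fn : Finset (IntermediateField K L), ∃ Mnew,
      Mnew ∈ T ∧ Mnew ∉ Fn ∧ ∀ M' ∈ Fn, M' ∈ T → Mnew ⊓ M' = K₁ := by
    intro Fn
    set bad := {M | M ∈ Fam ∧ ∃ K' ∈ Slt, K₁ < K' ∧ K' ≤ M} with hbaddef
    have hbadfin : bad.Finite := by
      have hsub : bad ⊆ ⋃ K' ∈ {K' | K' ∈ Slt ∧ K₁ < K'}, {M | M ∈ Fam ∧ K' ≤ M} := by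
        rintro M ⟨hM, K', hK', hlt', hle'⟩
        exact Set.mem_biUnion ⟨hK', hlt'⟩ ⟨hM, hle'⟩
      refine Set.Finite.subset (Set.Finite.biUnion (hlt.subset (fun x hx => hx.1)) ?_) hsub
      rintro K' ⟨hK'Slt, hK'gt⟩
      by_contra hinf'
      have hmem : K' ∈ Sg := ⟨hK'Slt, hinf'⟩
      exact lt_irrefl _ (lt_of_lt_of_le hK'gt (hK₁max hmem hK'gt.le))
    have hTleft : (T \ (bad ∪ ↑Fn)).Infinite := hT.diff (hbadfin.union Fn.finite_toSet)
    obtain ⟨Mnew, hMnew⟩ := hTleft.nonempty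
    obtain ⟨hMnewT, hMnewnot⟩ := hMnew
    rw [Set.mem_union] at hMnewnot
    push_neg at hMnewnot
    refine ⟨Mnew, hMnewT, fun h => hMnewnot.2 h, ?_⟩
    intro M' hM'Fn hM'T
    by_contra hne'
    have hMne : Mnew ≠ M' := fun h => hMnewnot.2 (h ▸ hM'Fn)
    have hK'mem : Mnew ⊓ M' ∈ Slt := stepA Mnew hMnewT.1 M' hM'T.1 hMne
    exact hMnewnot.1 ⟨hMnewT.1, Mnew ⊓ M', hK'mem,
      lt_of_le_of_ne (le_inf hMnewT.2 hM'T.2) (Ne.symm hne'), inf_le_left⟩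
  -- Step D: construct the sequence
  choose step hstep using key
  let acc : ℕ → Finset (IntermediateField K L) :=
    fun n => Nat.rec ∅ (fun _ F => insert (step F) F) n
  let M : ℕ → IntermediateField K L := fun n => step (acc n)
  have acc_succ : ∀ n, acc (n + 1) = insert (M n) (acc n) := fun n => rfl
  have acc_mono : ∀ m n, m ≤ n → acc m ⊆ acc n := by
    intro m n h
    induction n, h using Nat.le_induction with
    | base => exact subset_rfl
    | succ n hmn ih => rw [acc_succ]; exact ih.trans (Finset.subset_insert _ _)
  have hMT : ∀ n, M n ∈ T := fun n => (hstep (acc n)).1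
  have hMnot : ∀ n, M n ∉ acc n := fun n => (hstep (acc n)).2.1
  have hMlt : ∀ i j, i < j → M i ∈ acc j := by
    intro i j h
    apply acc_mono (i + 1) j h
    rw [acc_succ]
    exact Finset.mem_insert_self _ _
  have hinter : ∀ i j, i < j → M j ⊓ M i = K₁ :=
    fun i j h => (hstep (acc j)).2.2 (M i) (hMlt i j h) (hMT i)
  have hinj : Function.Injective M := by
    intro i j h
    rcases lt_trichotomy i j with h' | h' | h'
    · have := hMlt i j h'; rw [h] at this; exact absurd this (hMnot j)
    · exact h'
    · have := hMlt j i h'; rw [← h] at this; exact absurd this (hMnot i)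
  have hpair : ∀ i j, i ≠ j → M i ⊓ M j = K₁ := by
    intro i j hij
    rcases lt_or_gt_of_ne hij with h | h
    · exact (inf_comm _ _).trans (hinter i j h)
    · exact hinter j i h
  obtain ⟨hK₁fd, hK₁rank, hK₁gal⟩ := hK₁Slt
  have hle : ∀ i, K₁ ≤ M i := fun i => (hMT i).2
  refine ⟨K₁, hK₁fd, hK₁gal, M, hinj, fun i => (hMT i).1, hpair, hle, ?_⟩
  -- Step E: linear disjointness
  intro i j hij
  haveI := hK₁fd; haveI := hK₁gal
  haveI : Algebra.IsSeparable K L := IsGalois.to_isSeparable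
  haveI : Algebra.IsSeparable ↥K₁ L := Algebra.isSeparable_tower_top_of_isSeparable K ↥K₁ L
  obtain ⟨hif, hir, hig⟩ := (hMT i).1
  obtain ⟨hjf, hjr, hjg⟩ := (hMT j).1
  haveI := hif; haveI := hjf; haveI := hig; haveI := hjg
  haveI hfi : FiniteDimensional K ↥(extendScalars (hle i)) := hif
  haveI hfj : FiniteDimensional K ↥(extendScalars (hle j)) := hjf
  haveI : FiniteDimensional ↥K₁ ↥(extendScalars (hle i)) :=
    Module.Finite.right K ↥K₁ ↥(extendScalars (hle i))
  haveI : FiniteDimensional ↥K₁ ↥(extendScalars (hle j)) :=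
    Module.Finite.right K ↥K₁ ↥(extendScalars (hle j))
  haveI hni : Normal K ↥(extendScalars (hle i)) := hig.to_normal
  haveI hnj : Normal K ↥(extendScalars (hle j)) := hjg.to_normal
  haveI : Normal ↥K₁ ↥(extendScalars (hle i)) :=
    Normal.tower_top_of_normal (F := K) (K := ↥K₁) (E := ↥(extendScalars (hle i)))
  haveI : Normal ↥K₁ ↥(extendScalars (hle j)) :=
    Normal.tower_top_of_normal (F := K) (K := ↥K₁) (E := ↥(extendScalars (hle j)))
  apply aux_linearDisjoint
  rw [extendScalars_inf]
  refine restrictScalars_injective K ?_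
  rw [extendScalars_restrictScalars, restrictScalars_bot_eq_self]
  exact hpair i j hij
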